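/- Let f_1, …, f_T : K → ℝ be convex differentiable functions on a closed convex set K ⊆ ℝ^d of diameter at most D, with ‖∇f_t(x)‖₂ ≤ G for all x ∈ K and all t. Let x_1 ∈ K be arbitrary and define x_{t+1} = Proj_K(x_t − η_t ∇f_t(x_t)) with step sizes η_t = D/(G√t). Then (1/T) Σ_{t=1}^T f_t(x_t) − min_{x ∈ K} (1/T) Σ_{t=1}^T f_t(x) ≤ 3GD/(2√T). -/

import Mathlib

open Finset RealInnerProductSpace

-- gradient convexity inequality
lemma grad_ineq {d : ℕ} {K : Set (EuclideanSpace ℝ (Fin d))} (hKconv : Convex ℝ K)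
    {f : EuclideanSpace ℝ (Fin d) → ℝ} (hconv : ConvexOn ℝ K f)
    {x z : EuclideanSpace ℝ (Fin d)} (hx : x ∈ K) (hz : z ∈ K)
    (hdiff : DifferentiableAt ℝ f x) :
    f x - f z ≤ ⟪gradient f x, x - z⟫ := by
  set g : ℝ → ℝ := fun s => f (AffineMap.lineMap x z s) with hg
  have hgc : ConvexOn ℝ (Set.Icc (0:ℝ) 1) g := by
    have := hconv.comp_affineMap (AffineMap.lineMap x z)
    exact this.subset (fun s hs => hKconv.lineMap_mem hx hz hs) (convex_Icc 0 1)
  have hline : HasDerivAt (fun s : ℝ => AffineMap.lineMap x z s) (z - x) 0 := by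
    have h1 : (fun s : ℝ => (AffineMap.lineMap x z) s) = fun s : ℝ => s • (z - x) + x := by
      funext s; simp [AffineMap.lineMap_apply_module]; module
    rw [h1]
    simpa only [one_smul, id_eq] using ((hasDerivAt_id (0:ℝ)).smul_const (z - x)).add_const x
  have hgrad := hdiff.hasGradientAt
  have hfd : HasFDerivAt f (InnerProductSpace.toDual ℝ _ (gradient f x)) x := hgrad.hasFDerivAt
  have hfd' : HasFDerivAt f (InnerProductSpace.toDual ℝ _ (gradient f x)) (AffineMap.lineMap x z (0:ℝ)) := by
    simpa using hfd
  have hderiv : HasDerivAt g (⟪gradient f x, z - x⟫) 0 := by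
    have := hfd'.comp_hasDerivAt 0 hline
    simpa [hg, Function.comp_def] using this
  have hslope := hgc.le_slope_of_hasDerivAt (by norm_num) (by norm_num) (by norm_num : (0:ℝ) < 1) hderiv
  have h01 : slope g 0 1 = g 1 - g 0 := by simp [slope]
  rw [h01] at hslope
  have hg0 : g 0 = f x := by simp [hg]
  have hg1 : g 1 = f z := by simp [hg]
  rw [hg0, hg1] at hslope
  have : ⟪gradient f x, z - x⟫ = - ⟪gradient f x, x - z⟫ := by
    rw [← inner_neg_right]; congr 1; abel
  linarith [hslope, this ▸ hslope]

-- projection contraction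
lemma proj_contract {d : ℕ} {K : Set (EuclideanSpace ℝ (Fin d))} (hKconv : Convex ℝ K)
    {u v z : EuclideanSpace ℝ (Fin d)} (hv : v ∈ K) (hz : z ∈ K)
    (hmin : ∀ y ∈ K, ‖u - v‖ ≤ ‖u - y‖) :
    ‖v - z‖ ^ 2 ≤ ‖u - z‖ ^ 2 := by
  have hNe : Nonempty K := ⟨⟨v, hv⟩⟩
  have heq : ‖u - v‖ = ⨅ w : K, ‖u - w‖ := by
    apply le_antisymm
    · exact le_ciInf fun w => hmin w w.2
    · refine ciInf_le ⟨0, ?_⟩ (⟨v, hv⟩ : K)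
      rintro r ⟨w, rfl⟩
      exact norm_nonneg _
  have hobt : ⟪u - v, z - v⟫ ≤ 0 :=
    (norm_eq_iInf_iff_real_inner_le_zero hKconv hv).1 heq z hz
  have hexp : ‖u - z‖ ^ 2 = ‖u - v‖ ^ 2 - 2 * ⟪u - v, z - v⟫ + ‖z - v‖ ^ 2 := by
    have : u - z = (u - v) - (z - v) := by abel
    rw [this, norm_sub_sq_real]
  rw [norm_sub_rev v z]
  nlinarith [sq_nonneg ‖u - v‖]

lemma abel_aux (a b : ℕ → ℝ) (D2 : ℝ) (N : ℕ)
    (ha : ∀ t, 0 ≤ a t)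
    (haD : ∀ t, 1 ≤ t → t ≤ N + 1 → a t ≤ D2)
    (hb : ∀ t, 0 ≤ b t) (hmono : ∀ t, b t ≤ b (t + 1)) :
    ∑ t ∈ Icc 1 N, b t * (a t - a (t + 1)) ≤ b N * (D2 - a (N + 1)) := by
  induction N with
  | zero =>
    rw [Finset.Icc_eq_empty (by omega), sum_empty]
    exact mul_nonneg (hb 0) (by linarith [haD 1 le_rfl (by omega)])
  | succ N ih =>
    rw [Finset.sum_Icc_succ_top (by omega : 1 ≤ N + 1)]
    have h1 := ih (fun t h1 h2 => haD t h1 (by omega))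
    have h2 := haD (N + 1) (by omega) (by omega)
    have h3 := hmono N
    have h4 := hb (N + 1)
    nlinarith [ha (N + 2), ha (N + 1)]

lemma sum_inv_sqrt (N : ℕ) : ∑ t ∈ Icc 1 N, 1 / Real.sqrt t ≤ 2 * Real.sqrt N := by
  induction N with
  | zero => simp
  | succ N ih =>
    rw [Finset.sum_Icc_succ_top (by omega : 1 ≤ N + 1)]
    have hr : (0:ℝ) < Real.sqrt (N + 1) := Real.sqrt_pos.2 (by positivity)
    have hs : (0:ℝ) ≤ Real.sqrt N := Real.sqrt_nonneg _
    have hr2 : Real.sqrt (N + 1) ^ 2 = (N:ℝ) + 1 := Real.sq_sqrt (by positivity)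
    have hs2 : Real.sqrt N ^ 2 = (N:ℝ) := Real.sq_sqrt (by positivity)
    have key : 1 / Real.sqrt (N + 1) ≤ 2 * Real.sqrt (N + 1) - 2 * Real.sqrt N := by
      rw [div_le_iff₀ hr]
      nlinarith [sq_nonneg (Real.sqrt (N + 1) - Real.sqrt N)]
    push_cast
    push_cast at ih
    linarith

/-- The standard regret bound for online gradient descent with step sizes `η_t = D/(G√t)`. -/
theorem ogd_regret (d T : ℕ) (hT : 0 < T)
    (K : Set (EuclideanSpace ℝ (Fin d))) (hKc : IsClosed K) (hKconv : Convex ℝ K)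
    (D G : ℝ) (hD : 0 < D) (hG : 0 < G)
    (hdiam : ∀ x ∈ K, ∀ y ∈ K, ‖x - y‖ ≤ D)
    (f : ℕ → EuclideanSpace ℝ (Fin d) → ℝ)
    (hconv : ∀ t, ConvexOn ℝ K (f t))
    (hdiff : ∀ t, ∀ x ∈ K, DifferentiableAt ℝ (f t) x)
    (hgrad : ∀ t, ∀ x ∈ K, ‖gradient (f t) x‖ ≤ G)
    (x : ℕ → EuclideanSpace ℝ (Fin d)) (hx1 : x 1 ∈ K)
    (hstep : ∀ t, 1 ≤ t → t ≤ T →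
      x (t + 1) ∈ K ∧
      ∀ y ∈ K, ‖(x t - (D / (G * Real.sqrt t)) • gradient (f t) (x t)) - x (t + 1)‖
        ≤ ‖(x t - (D / (G * Real.sqrt t)) • gradient (f t) (x t)) - y‖) :
    ∀ z ∈ K,
      (1 / (T : ℝ)) * ∑ t ∈ Finset.Icc 1 T, f t (x t)
        - (1 / (T : ℝ)) * ∑ t ∈ Finset.Icc 1 T, f t z
      ≤ 3 * G * D / (2 * Real.sqrt T) := by
  intro z hz
  -- membership of iterates
  have hxK : ∀ t, 1 ≤ t → t ≤ T + 1 → x t ∈ K := by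
    intro t h1 h2
    obtain ⟨n, rfl⟩ : ∃ n, t = n + 1 := ⟨t - 1, by omega⟩
    rcases Nat.eq_zero_or_pos n with h | h
    · rw [h]; exact hx1
    · exact (hstep n (by omega) (by omega)).1
  set a : ℕ → ℝ := fun t => ‖x t - z‖ ^ 2 with ha_def
  set b : ℕ → ℝ := fun t => G * Real.sqrt t / (2 * D) with hb_def
  -- per-step bound
  have key : ∀ t ∈ Icc 1 T,
      f t (x t) - f t z ≤ b t * (a t - a (t + 1)) + (D * G / 2) * (1 / Real.sqrt t) := by
    intro t ht
    rw [mem_Icc] at ht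
    obtain ⟨h1, h2⟩ := ht
    have hxt : x t ∈ K := hxK t h1 (by omega)
    have hst : 0 < Real.sqrt t := Real.sqrt_pos.2 (by exact_mod_cast Nat.pos_of_ne_zero (by omega))
    set η : ℝ := D / (G * Real.sqrt t) with hη_def
    have hη : 0 < η := by positivity
    set gr : EuclideanSpace ℝ (Fin d) := gradient (f t) (x t) with hgr_def
    have hcv : f t (x t) - f t z ≤ ⟪gr, x t - z⟫ :=
      grad_ineq hKconv (hconv t) hxt hz (hdiff t _ hxt)
    have hpc : ‖x (t + 1) - z‖ ^ 2 ≤ ‖(x t - η • gr) - z‖ ^ 2 :=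
      proj_contract hKconv (hstep t h1 h2).1 hz (hstep t h1 h2).2
    have hexp : ‖(x t - η • gr) - z‖ ^ 2
        = ‖x t - z‖ ^ 2 - 2 * η * ⟪gr, x t - z⟫ + η ^ 2 * ‖gr‖ ^ 2 := by
      have h : (x t - η • gr) - z = (x t - z) - η • gr := by abel
      rw [h, norm_sub_sq_real, real_inner_smul_right, norm_smul, real_inner_comm]
      simp [Real.norm_eq_abs, abs_of_pos hη, mul_pow]
      ring
    have hgb : ‖gr‖ ≤ G := hgrad t _ hxt
    have hgb2 : ‖gr‖ ^ 2 ≤ G ^ 2 := by nlinarith [norm_nonneg gr]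
    have h2η : 2 * η * ⟪gr, x t - z⟫ ≤ a t - a (t + 1) + η ^ 2 * G ^ 2 := by
      have := hpc
      rw [hexp] at this
      simp only [ha_def]
      nlinarith [sq_nonneg η]
    -- divide by 2η
    have hbη : b t * (2 * η) = 1 := by
      simp only [hb_def, hη_def]
      field_simp
    have hI : ⟪gr, x t - z⟫ ≤ b t * (a t - a (t + 1)) + b t * (η ^ 2 * G ^ 2) := by
      have hbpos : 0 < b t := by
        simp only [hb_def]; positivity
      have := mul_le_mul_of_nonneg_left h2η hbpos.le
      calc ⟪gr, x t - z⟫ = b t * (2 * η) * ⟪gr, x t - z⟫ := by rw [hbη]; ring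
        _ = b t * (2 * η * ⟪gr, x t - z⟫) := by ring
        _ ≤ b t * (a t - a (t + 1) + η ^ 2 * G ^ 2) := this
        _ = b t * (a t - a (t + 1)) + b t * (η ^ 2 * G ^ 2) := by ring
    have hlast : b t * (η ^ 2 * G ^ 2) = (D * G / 2) * (1 / Real.sqrt t) := by
      simp only [hb_def, hη_def]
      field_simp
    rw [hlast] at hI
    linarith
  -- sum the per-step bounds
  have hsum : ∑ t ∈ Icc 1 T, (f t (x t) - f t z)
      ≤ ∑ t ∈ Icc 1 T, (b t * (a t - a (t + 1)) + (D * G / 2) * (1 / Real.sqrt t)) :=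
    Finset.sum_le_sum key
  rw [Finset.sum_add_distrib] at hsum
  have hsqT : 0 < Real.sqrt T := Real.sqrt_pos.2 (by exact_mod_cast hT)
  -- first part via Abel
  have hA : ∑ t ∈ Icc 1 T, b t * (a t - a (t + 1)) ≤ b T * (D ^ 2 - a (T + 1)) := by
    apply abel_aux
    · intro t; simp only [ha_def]; positivity
    · intro t h1 h2
      have hxt : x t ∈ K := hxK t h1 h2
      have := hdiam (x t) hxt z hz
      simp only [ha_def]
      nlinarith [norm_nonneg (x t - z)]
    · intro t; simp only [hb_def]; positivity
    · intro t
      simp only [hb_def]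
      gcongr
      exact Nat.le_succ t
  have hA2 : b T * (D ^ 2 - a (T + 1)) ≤ G * D * Real.sqrt T / 2 := by
    have h1 : 0 ≤ a (T + 1) := by simp only [ha_def]; positivity
    have h2 : b T * D ^ 2 = G * D * Real.sqrt T / 2 := by
      simp only [hb_def]; field_simp
    have hbpos : 0 ≤ b T := by simp only [hb_def]; positivity
    nlinarith
  -- second part
  have hB : ∑ t ∈ Icc 1 T, (D * G / 2) * (1 / Real.sqrt t) ≤ D * G * Real.sqrt T := by
    rw [← Finset.mul_sum]
    calc (D * G / 2) * ∑ t ∈ Icc 1 T, 1 / Real.sqrt t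
        ≤ (D * G / 2) * (2 * Real.sqrt T) :=
          mul_le_mul_of_nonneg_left (sum_inv_sqrt T) (by positivity)
      _ = D * G * Real.sqrt T := by ring
  have htotal : ∑ t ∈ Icc 1 T, (f t (x t) - f t z) ≤ 3 / 2 * G * D * Real.sqrt T := by
    calc ∑ t ∈ Icc 1 T, (f t (x t) - f t z)
        ≤ b T * (D ^ 2 - a (T + 1)) + D * G * Real.sqrt T := by linarith
      _ ≤ G * D * Real.sqrt T / 2 + D * G * Real.sqrt T := by linarith
      _ = 3 / 2 * G * D * Real.sqrt T := by ring
  -- conclude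
  have hTpos : (0:ℝ) < T := by exact_mod_cast hT
  have hmul : Real.sqrt T * Real.sqrt T = (T:ℝ) := Real.mul_self_sqrt (by positivity)
  rw [← mul_sub, ← Finset.sum_sub_distrib]
  calc (1 / (T:ℝ)) * ∑ t ∈ Icc 1 T, (f t (x t) - f t z)
      ≤ (1 / (T:ℝ)) * (3 / 2 * G * D * Real.sqrt T) :=
        mul_le_mul_of_nonneg_left htotal (by positivity)
    _ = 3 * G * D / (2 * Real.sqrt T) := by
        field_simp
        linear_combination hmul
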